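/- There exist positive definite 2×2 complex matrices A, B, C such that d_{1/2}(A, B) > d_{1/2}(A, C) + d_{1/2}(C, B). Hence the triangle inequality for d_p fails already for p = 1/2. -/

import Mathlib

open scoped ComplexOrder

/-- Real power of a square complex matrix, taken via the continuous functional calculus
(on the spectrum, which lies in `[0, ∞)` for positive semidefinite matrices). -/
noncomputable def Matrix.rpowCFC {n : Type*} [Fintype n] [DecidableEq n]
    (A : Matrix n n ℂ) (r : ℝ) : Matrix n n ℂ :=
  cfc (fun x : ℝ => x ^ r) A

/-- The operation `A κₚ B := (A^{p/4} B^{p/2} A^{p/4})^{1/p}`. -/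
noncomputable def Matrix.kappa {n : Type*} [Fintype n] [DecidableEq n]
    (p : ℝ) (A B : Matrix n n ℂ) : Matrix n n ℂ :=
  (A.rpowCFC (p / 4) * B.rpowCFC (p / 2) * A.rpowCFC (p / 4)).rpowCFC p⁻¹

/-- `d_p(X, Y) := (Tr((X + Y)/2 − X κₚ Y))^{1/2}` (the trace inside is a nonnegative real). -/
noncomputable def Matrix.dp {n : Type*} [Fintype n] [DecidableEq n]
    (p : ℝ) (X Y : Matrix n n ℂ) : ℝ :=
  Real.sqrt ((Matrix.trace ((2 : ℂ)⁻¹ • (X + Y) - Matrix.kappa p X Y)).re)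

section Helpers
open Matrix

variable {n : Type*} [Fintype n] [DecidableEq n]

lemma posDef_conj_aux {A B : Matrix n n ℂ} (hA : A.PosDef) (hB : IsUnit B) :
    (Bᴴ * A * B).PosDef := by
  refine Matrix.PosDef.of_dotProduct_mulVec_pos
    (Matrix.isHermitian_conjTranspose_mul_mul B hA.1) fun x hx => ?_
  have hBx : B *ᵥ x ≠ 0 := by
    intro h
    exact hx <| (Matrix.mulVec_injective_iff_isUnit.mpr hB) (by simpa using h)
  simpa only [Matrix.star_mulVec, Matrix.dotProduct_mulVec, Matrix.vecMul_vecMul] using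
    hA.dotProduct_mulVec_pos hBx

lemma posDef_pow_aux {M : Matrix n n ℂ} (hM : M.PosDef) : ∀ k : ℕ, (M ^ k).PosDef
  | 0 => by simpa using Matrix.PosDef.one
  | 1 => by simpa using hM
  | (k + 2) => by
    rw [pow_succ, pow_succ']
    simpa only [hM.isHermitian.eq] using posDef_conj_aux (posDef_pow_aux hM k) hM.isUnit

lemma spectrum_pos_aux {M : Matrix n n ℂ} (hM : M.PosDef) {x : ℝ}
    (hx : x ∈ spectrum ℝ M) : 0 < x := by
  rw [hM.isHermitian.spectrum_real_eq_range_eigenvalues] at hx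
  obtain ⟨i, rfl⟩ := hx
  exact hM.eigenvalues_pos i

lemma rpowCFC_pow_aux {M : Matrix n n ℂ} (hM : M.PosDef) (k j : ℕ) (r : ℝ) (hr : 0 ≤ r)
    (hkr : (k : ℝ) * r = (j : ℝ)) : (M ^ k).rpowCFC r = M ^ j := by
  have hH := hM.isHermitian
  have hf : ContinuousOn (fun x : ℝ => x ^ k) (spectrum ℝ M) := (continuous_pow k).continuousOn
  have hg : ContinuousOn (fun x : ℝ => x ^ r) ((fun x : ℝ => x ^ k) '' spectrum ℝ M) :=
    (Real.continuous_rpow_const hr).continuousOn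
  calc (M ^ k).rpowCFC r
      = cfc (fun x : ℝ => x ^ r) (cfc (fun x : ℝ => x ^ k) M) := by
        rw [Matrix.rpowCFC]
        exact congrArg (cfc (fun x : ℝ => x ^ r)) (cfc_pow_id (R := ℝ) M k hH).symm
    _ = cfc (fun x : ℝ => (x ^ k) ^ r) M :=
        (cfc_comp' (fun x : ℝ => x ^ r) (fun x : ℝ => x ^ k) M hg hf hH).symm
    _ = cfc (fun x : ℝ => x ^ j) M := by
        apply cfc_congr
        intro x hx
        have hx0 : (0 : ℝ) ≤ x := (spectrum_pos_aux hM hx).le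
        simp only
        rw [← Real.rpow_natCast x k, ← Real.rpow_mul hx0, hkr, Real.rpow_natCast]
    _ = M ^ j := cfc_pow_id (R := ℝ) M j hH

lemma rpowCFC_two_aux {N : Matrix n n ℂ} (hN : N.IsHermitian) : N.rpowCFC 2 = N ^ 2 := by
  calc N.rpowCFC 2
      = cfc (fun x : ℝ => x ^ (2 : ℕ)) N := by
        rw [Matrix.rpowCFC]
        exact cfc_congr fun x _ => by
          rw [← Real.rpow_natCast x 2]; norm_num
    _ = N ^ 2 := cfc_pow_id (R := ℝ) N 2 hN

lemma posDef_fin_two_aux (a b c : ℝ) (ha : 0 < a) (hdet : b * b < a * c) :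
    (!![(a : ℂ), (b : ℂ); (b : ℂ), (c : ℂ)]).PosDef := by
  refine Matrix.PosDef.of_dotProduct_mulVec_pos ?_ ?_
  · ext i j
    fin_cases i <;> fin_cases j <;>
      simp [Matrix.conjTranspose_apply, Complex.conj_ofReal]
  · intro x hx
    have key : dotProduct (star x)
        ((!![(a : ℂ), (b : ℂ); (b : ℂ), (c : ℂ)]) *ᵥ x)
        = (((Complex.normSq ((a : ℂ) * x 0 + (b : ℂ) * x 1)
            + (a * c - b * b) * Complex.normSq (x 1)) / a : ℝ) : ℂ) := by
      rw [Complex.ofReal_div, eq_div_iff (by exact_mod_cast ha.ne')]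
      push_cast
      rw [← Complex.mul_conj, ← Complex.mul_conj]
      simp only [dotProduct, Matrix.mulVec, Fin.sum_univ_two, Pi.star_apply, Matrix.of_apply,
        Matrix.cons_val', Matrix.cons_val_zero, Matrix.cons_val_one, Matrix.head_cons,
        Matrix.empty_val', Matrix.cons_val_fin_one, Matrix.head_fin_const, map_add, _root_.map_mul,
        Complex.conj_ofReal, RCLike.star_def]
      ring
    rw [key, Complex.zero_lt_real]
    apply div_pos _ ha
    by_cases hv : x 1 = 0
    · have hu : x 0 ≠ 0 := by
        intro hu
        exact hx (by ext i; fin_cases i <;> simpa [hu, hv])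
      have : (a : ℂ) * x 0 + (b : ℂ) * x 1 ≠ 0 := by
        simp only [hv, mul_zero, add_zero]
        exact mul_ne_zero (by exact_mod_cast ha.ne') hu
      have h1 : 0 < Complex.normSq ((a : ℂ) * x 0 + (b : ℂ) * x 1) :=
        Complex.normSq_pos.mpr this
      nlinarith [Complex.normSq_nonneg (x 1)]
    · have h1 : 0 < Complex.normSq (x 1) := Complex.normSq_pos.mpr hv
      nlinarith [Complex.normSq_nonneg ((a : ℂ) * x 0 + (b : ℂ) * x 1)]

end Helpers

/-- The triangle inequality for `d_{1/2}` fails: there are positive definite `2×2` matrices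
`A, B, C` with `d_{1/2}(A, B) > d_{1/2}(A, C) + d_{1/2}(C, B)`. -/
theorem exists_triangle_ineq_fails_d_half :
    ∃ A B C : Matrix (Fin 2) (Fin 2) ℂ, A.PosDef ∧ B.PosDef ∧ C.PosDef ∧
      Matrix.dp (1 / 2) A C + Matrix.dp (1 / 2) C B < Matrix.dp (1 / 2) A B := by
  set P : Matrix (Fin 2) (Fin 2) ℂ := !![1, -1; -1, 3] with hPdef
  set Q : Matrix (Fin 2) (Fin 2) ℂ := !![3, -2; -2, 2] with hQdef
  set R : Matrix (Fin 2) (Fin 2) ℂ := !![3, -1; -1, 3] with hRdef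
  have hP : P.PosDef := by
    have := posDef_fin_two_aux 1 (-1) 3 (by norm_num) (by norm_num)
    convert this using 2 <;> norm_num
  have hQ : Q.PosDef := by
    have := posDef_fin_two_aux 3 (-2) 2 (by norm_num) (by norm_num)
    convert this using 2 <;> norm_num
  have hR : R.PosDef := by
    have := posDef_fin_two_aux 3 (-1) 3 (by norm_num) (by norm_num)
    convert this using 2 <;> norm_num
  refine ⟨P ^ 8, Q ^ 8, R ^ 8, posDef_pow_aux hP 8, posDef_pow_aux hQ 8, posDef_pow_aux hR 8, ?_⟩
  -- simplify kappa for eighth powers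
  have kappa_eq : ∀ X Y : Matrix (Fin 2) (Fin 2) ℂ, X.PosDef → Y.PosDef →
      Matrix.kappa (1 / 2) (X ^ 8) (Y ^ 8) = (X * Y ^ 2 * X) ^ 2 := by
    intro X Y hX hY
    have hXr : (X ^ 8).rpowCFC (1 / 2 / 4) = X := by
      have := rpowCFC_pow_aux hX 8 1 (1 / 2 / 4) (by norm_num) (by norm_num)
      simpa using this
    have hYr : (Y ^ 8).rpowCFC (1 / 2 / 2) = Y ^ 2 :=
      rpowCFC_pow_aux hY 8 2 (1 / 2 / 2) (by norm_num) (by norm_num)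
    have hN : (X * Y ^ 2 * X).PosSemidef := by
      have := ((hY.posSemidef).pow 2).mul_mul_conjTranspose_same X
      rwa [hX.isHermitian.eq] at this
    rw [Matrix.kappa, hXr, hYr, show ((1 : ℝ) / 2)⁻¹ = (2 : ℝ) by norm_num,
      rpowCFC_two_aux hN.isHermitian]
  -- explicit powers
  have hP8 : P ^ 8 = !![2704, -6528; -6528, 15760] := by
    rw [show (8 : ℕ) = 2 * 2 * 2 by norm_num, pow_mul, pow_mul,
      hPdef, show (!![1, -1; -1, 3] : Matrix (Fin 2) (Fin 2) ℂ) ^ 2 = !![2, -4; -4, 10] by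
        rw [pow_two]; norm_num [Matrix.mul_fin_two],
      show (!![2, -4; -4, 10] : Matrix (Fin 2) (Fin 2) ℂ) ^ 2 = !![20, -48; -48, 116] by
        rw [pow_two]; norm_num [Matrix.mul_fin_two],
      pow_two]
    norm_num [Matrix.mul_fin_two]
  have hQ8 : Q ^ 8 = !![116461, -90930; -90930, 70996] := by
    rw [show (8 : ℕ) = 2 * 2 * 2 by norm_num, pow_mul, pow_mul,
      hQdef, show (!![3, -2; -2, 2] : Matrix (Fin 2) (Fin 2) ℂ) ^ 2 = !![13, -10; -10, 8] by
        rw [pow_two]; norm_num [Matrix.mul_fin_two],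
      show (!![13, -10; -10, 8] : Matrix (Fin 2) (Fin 2) ℂ) ^ 2 = !![269, -210; -210, 164] by
        rw [pow_two]; norm_num [Matrix.mul_fin_two],
      pow_two]
    norm_num [Matrix.mul_fin_two]
  have hR8 : R ^ 8 = !![32896, -32640; -32640, 32896] := by
    rw [show (8 : ℕ) = 2 * 2 * 2 by norm_num, pow_mul, pow_mul,
      hRdef, show (!![3, -1; -1, 3] : Matrix (Fin 2) (Fin 2) ℂ) ^ 2 = !![10, -6; -6, 10] by
        rw [pow_two]; norm_num [Matrix.mul_fin_two],
      show (!![10, -6; -6, 10] : Matrix (Fin 2) (Fin 2) ℂ) ^ 2 = !![136, -120; -120, 136] by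
        rw [pow_two]; norm_num [Matrix.mul_fin_two],
      pow_two]
    norm_num [Matrix.mul_fin_two]
  have hKAB : (P * Q ^ 2 * P) ^ 2 = !![7610, -14322; -14322, 26954] := by
    rw [hPdef, hQdef, pow_two, pow_two]; norm_num [Matrix.mul_fin_two]
  have hKAC : (P * R ^ 2 * P) ^ 2 = !![5120, -10752; -10752, 22592] := by
    rw [hPdef, hRdef, pow_two, pow_two]; norm_num [Matrix.mul_fin_two]
  have hKCB : (R * Q ^ 2 * R) ^ 2 = !![60794, -53790; -53790, 47594] := by
    rw [hRdef, hQdef, pow_two, pow_two]; norm_num [Matrix.mul_fin_two]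
  -- compute the three dp values
  have dAB : Matrix.dp (1 / 2) (P ^ 8) (Q ^ 8) = Real.sqrt (136793 / 2) := by
    rw [Matrix.dp, kappa_eq P Q hP hQ, hKAB, hP8, hQ8]
    norm_num [Matrix.trace_fin_two, Matrix.smul_apply, Matrix.sub_apply, Matrix.add_apply,
      Complex.add_re, Complex.sub_re, Complex.mul_re, Complex.inv_re, Complex.normSq]
  have dAC : Matrix.dp (1 / 2) (P ^ 8) (R ^ 8) = Real.sqrt 14416 := by
    rw [Matrix.dp, kappa_eq P R hP hR, hKAC, hP8, hR8]
    norm_num [Matrix.trace_fin_two, Matrix.smul_apply, Matrix.sub_apply, Matrix.add_apply,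
      Complex.add_re, Complex.sub_re, Complex.mul_re, Complex.inv_re, Complex.normSq]
  have dCB : Matrix.dp (1 / 2) (R ^ 8) (Q ^ 8) = Real.sqrt (36473 / 2) := by
    rw [Matrix.dp, kappa_eq R Q hR hQ, hKCB, hR8, hQ8]
    norm_num [Matrix.trace_fin_two, Matrix.smul_apply, Matrix.sub_apply, Matrix.add_apply,
      Complex.add_re, Complex.sub_re, Complex.mul_re, Complex.inv_re, Complex.normSq]
  rw [dAB, dAC, dCB]
  have h1 : Real.sqrt 14416 ≤ 121 := by
    rw [show (121 : ℝ) = Real.sqrt (121 ^ 2) from (Real.sqrt_sq (by norm_num)).symm]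
    exact Real.sqrt_le_sqrt (by norm_num)
  have h2 : Real.sqrt (36473 / 2) ≤ 136 := by
    rw [show (136 : ℝ) = Real.sqrt (136 ^ 2) from (Real.sqrt_sq (by norm_num)).symm]
    exact Real.sqrt_le_sqrt (by norm_num)
  have h3 : (257 : ℝ) < Real.sqrt (136793 / 2) := by
    rw [show (257 : ℝ) = Real.sqrt (257 ^ 2) from (Real.sqrt_sq (by norm_num)).symm]
    exact Real.sqrt_lt_sqrt (by positivity) (by norm_num)
  linarith
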